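/- Let p be a polynomial, f a polynomial vector field, and x(t) the solution of ẋ = f(x) with x(0) = x₀. If γ_{p,f}(x₀) = ∞ (i.e., L^k_f p(x₀) = 0 for all k ∈ ℕ), then there exists ε > 0 such that p(x(t)) = 0 for all t ∈ (0, ε). -/

import Mathlib

open MvPolynomial

/-- The Lie derivative of a polynomial `p` along the polynomial vector field `f`:
`⟨∇p, f⟩ = ∑ j, (∂p/∂x_j) * f_j`. -/
noncomputable def lieDeriv {n : ℕ} (f : Fin n → MvPolynomial (Fin n) ℝ)
    (p : MvPolynomial (Fin n) ℝ) : MvPolynomial (Fin n) ℝ :=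
  ∑ j, MvPolynomial.pderiv j p * f j

/-- Iterated Lie derivatives: `lieIter f k p = L^k_f p`. -/
noncomputable def lieIter {n : ℕ} (f : Fin n → MvPolynomial (Fin n) ℝ)
    (k : ℕ) (p : MvPolynomial (Fin n) ℝ) : MvPolynomial (Fin n) ℝ :=
  match k with
  | 0 => p
  | k + 1 => lieDeriv f (lieIter f k p)

lemma lieDeriv_C {n : ℕ} (f : Fin n → MvPolynomial (Fin n) ℝ) (r : ℝ) :
    lieDeriv f (C r) = 0 := by
  simp [lieDeriv]

lemma lieDeriv_add {n : ℕ} (f : Fin n → MvPolynomial (Fin n) ℝ) (q r : MvPolynomial (Fin n) ℝ) :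
    lieDeriv f (q + r) = lieDeriv f q + lieDeriv f r := by
  simp [lieDeriv, add_mul, Finset.sum_add_distrib]

lemma lieDeriv_mul_X {n : ℕ} (f : Fin n → MvPolynomial (Fin n) ℝ)
    (q : MvPolynomial (Fin n) ℝ) (i : Fin n) :
    lieDeriv f (q * X i) = lieDeriv f q * X i + q * f i := by
  simp only [lieDeriv, pderiv_mul, pderiv_X, add_mul, Finset.sum_add_distrib]
  congr 1
  · rw [Finset.sum_mul]; exact Finset.sum_congr rfl (fun j _ => by ring)
  · rw [Finset.sum_eq_single i]
    · simp
    · intro j _ hj; simp [Pi.single_apply, hj]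
    · simp

lemma hasDerivAt_eval {n : ℕ} (f : Fin n → MvPolynomial (Fin n) ℝ)
    {a b : ℝ} (x : ℝ → Fin n → ℝ)
    (hode : ∀ t ∈ Set.Ioo a b, ∀ i : Fin n,
      HasDerivAt (fun s => x s i) (MvPolynomial.eval (x t) (f i)) t)
    (q : MvPolynomial (Fin n) ℝ) {t : ℝ} (ht : t ∈ Set.Ioo a b) :
    HasDerivAt (fun s => MvPolynomial.eval (x s) q)
      (MvPolynomial.eval (x t) (lieDeriv f q)) t := by
  induction q using MvPolynomial.induction_on with
  | C r => simpa [lieDeriv_C] using (hasDerivAt_const t (r : ℝ))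
  | add q r hq hr => simpa [lieDeriv_add] using hq.fun_add hr
  | mul_X q i hq =>
    have := hq.fun_mul (hode t ht i)
    simpa [lieDeriv_mul_X, mul_comm, mul_assoc, mul_left_comm] using this

lemma exists_combination {n : ℕ} (f : Fin n → MvPolynomial (Fin n) ℝ)
    (p : MvPolynomial (Fin n) ℝ) :
    ∃ N : ℕ, ∃ q : Fin (N+1) → MvPolynomial (Fin n) ℝ,
      ∑ k, q k * lieIter f (k : ℕ) p = lieIter f (N+1) p := by
  set g : ℕ → MvPolynomial (Fin n) ℝ := fun k => lieIter f k p with hg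
  have hmono : Monotone (fun m => Ideal.span (Set.range (fun k : Fin (m+1) => g k))) := by
    intro m m' hmm
    apply Ideal.span_mono
    rintro y ⟨k, rfl⟩
    exact ⟨⟨k, lt_of_lt_of_le k.2 (by omega)⟩, rfl⟩
  obtain ⟨N, hN⟩ := monotone_stabilizes_iff_noetherian.mpr inferInstance
    ⟨fun m => Ideal.span (Set.range (fun k : Fin (m+1) => g k)), hmono⟩
  have hmem : g (N+1) ∈ Ideal.span (Set.range (fun k : Fin (N+1) => g k)) := by
    have h1 : g (N+1) ∈ Ideal.span (Set.range (fun k : Fin (N+2) => g k)) :=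
      Ideal.subset_span ⟨⟨N+1, by omega⟩, rfl⟩
    have := hN (N+1) (Nat.le_succ N)
    simp only [OrderHom.coe_mk] at this
    rwa [← this] at h1
  rw [Ideal.span, Submodule.mem_span_range_iff_exists_fun] at hmem
  obtain ⟨c, hc⟩ := hmem
  exact ⟨N, c, by simpa [smul_eq_mul] using hc⟩

/-- If all Lie derivatives of `p` along `f` vanish at `x₀` (infinite pointwise rank),
then `p` vanishes along the trajectory for small positive time. -/
theorem infinite_rank_implies_locally_zero
    {n : ℕ} (f : Fin n → MvPolynomial (Fin n) ℝ) (p : MvPolynomial (Fin n) ℝ)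
    (a b : ℝ) (ha : a < 0) (hb : 0 < b)
    (x : ℝ → Fin n → ℝ) (x₀ : Fin n → ℝ)
    (hx0 : x 0 = x₀)
    (hode : ∀ t ∈ Set.Ioo a b, ∀ i : Fin n,
      HasDerivAt (fun s => x s i) (MvPolynomial.eval (x t) (f i)) t)
    (hzero : ∀ k : ℕ, MvPolynomial.eval x₀ (lieIter f k p) = 0) :
    ∃ ε > 0, ∀ t ∈ Set.Ioo (0:ℝ) ε, MvPolynomial.eval (x t) p = 0 := by
  obtain ⟨N, q, hq⟩ := exists_combination f p
  set ε : ℝ := b / 2 with hε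
  have hε0 : 0 < ε := by positivity
  have hsub : Set.Icc 0 ε ⊆ Set.Ioo a b := by
    intro t ht
    exact ⟨lt_of_lt_of_le ha ht.1, lt_of_le_of_lt ht.2 (by linarith)⟩
  -- the vector of values of the iterated Lie derivatives along the trajectory
  set y : ℝ → (Fin (N+1) → ℝ) := fun t k => MvPolynomial.eval (x t) (lieIter f (k : ℕ) p)
    with hy
  -- derivatives of the components
  have hyderiv : ∀ t ∈ Set.Ioo a b, ∀ k : Fin (N+1),
      HasDerivAt (fun s => y s k) (MvPolynomial.eval (x t) (lieIter f ((k : ℕ)+1) p)) t := by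
    intro t ht k
    exact hasDerivAt_eval f x hode (lieIter f (k : ℕ) p) ht
  -- continuity of y on Icc 0 ε
  have hycont : ContinuousOn y (Set.Icc 0 ε) := by
    apply continuousOn_pi.mpr
    intro k
    intro t ht
    exact ((hyderiv t (hsub ht) k).continuousAt).continuousWithinAt
  -- coefficient functions and their bound
  have hccont : ContinuousOn (fun t => fun j : Fin (N+1) =>
      MvPolynomial.eval (x t) (q j)) (Set.Icc 0 ε) := by
    apply continuousOn_pi.mpr
    intro j t ht
    exact ((hasDerivAt_eval f x hode (q j) (hsub ht)).continuousAt).continuousWithinAt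
  obtain ⟨M, hM⟩ := (isCompact_Icc).exists_bound_of_continuousOn hccont
  have hMbound : ∀ t ∈ Set.Icc 0 ε, ∀ j : Fin (N+1),
      |MvPolynomial.eval (x t) (q j)| ≤ max M 0 := by
    intro t ht j
    calc |MvPolynomial.eval (x t) (q j)|
        ≤ ‖fun j : Fin (N+1) => MvPolynomial.eval (x t) (q j)‖ := by
          simpa [Real.norm_eq_abs] using norm_le_pi_norm
            (fun j : Fin (N+1) => MvPolynomial.eval (x t) (q j)) j
      _ ≤ M := hM t ht
      _ ≤ max M 0 := le_max_left _ _
  set Kr : ℝ := max 1 ((N+1) * max M 0) with hKr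
  have hKr1 : (1:ℝ) ≤ Kr := le_max_left _ _
  have hKr0 : (0:ℝ) ≤ Kr := le_trans zero_le_one hKr1
  set K : NNReal := Real.toNNReal Kr with hK
  have hKco : (K : ℝ) = Kr := Real.coe_toNNReal _ hKr0
  -- the linear vector field
  set v : ℝ → (Fin (N+1) → ℝ) → (Fin (N+1) → ℝ) := fun t z =>
    if t ∈ Set.Icc (0:ℝ) ε then
      (fun k : Fin (N+1) => if h : (k : ℕ) + 1 < N + 1 then z ⟨(k : ℕ) + 1, h⟩
        else ∑ j, MvPolynomial.eval (x t) (q j) * z j)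
    else 0 with hv
  have hlip : ∀ t, LipschitzWith K (v t) := by
    intro t
    by_cases htI : t ∈ Set.Icc (0:ℝ) ε
    · apply LipschitzWith.of_dist_le_mul
      intro z w
      have hd0 : (0:ℝ) ≤ (K : ℝ) * dist z w := mul_nonneg (by positivity) dist_nonneg
      rw [dist_pi_le_iff hd0]
      intro k
      simp only [hv, if_pos htI]
      by_cases h : (k : ℕ) + 1 < N + 1
      · simp only [dif_pos h]
        calc dist (z ⟨(k:ℕ)+1, h⟩) (w ⟨(k:ℕ)+1, h⟩) ≤ dist z w := dist_le_pi_dist z w _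
          _ ≤ (K : ℝ) * dist z w := by
              nlinarith [dist_nonneg (x := z) (y := w), hKco, hKr1]
      · simp only [dif_neg h]
        rw [Real.dist_eq, ← Finset.sum_sub_distrib]
        calc |∑ j, (MvPolynomial.eval (x t) (q j) * z j -
                MvPolynomial.eval (x t) (q j) * w j)|
            ≤ ∑ j, |MvPolynomial.eval (x t) (q j) * z j -
                MvPolynomial.eval (x t) (q j) * w j| := Finset.abs_sum_le_sum_abs _ _
          _ ≤ ∑ _j : Fin (N+1), max M 0 * dist z w := by
              apply Finset.sum_le_sum
              intro j _
              rw [← mul_sub, abs_mul]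
              apply mul_le_mul (hMbound t htI j) (by
                  rw [← Real.dist_eq]; exact dist_le_pi_dist z w j)
                (abs_nonneg _) (le_max_right _ _)
          _ = ((N+1) * max M 0) * dist z w := by
              rw [Finset.sum_const, Finset.card_univ, Fintype.card_fin]
              ring
          _ ≤ (K : ℝ) * dist z w := by
              apply mul_le_mul_of_nonneg_right _ dist_nonneg
              rw [hKco]; exact le_max_right _ _
    · simp only [hv, if_neg htI]
      exact LipschitzWith.const' 0
  -- y is a solution
  have hy' : ∀ t ∈ Set.Ico (0:ℝ) ε, HasDerivWithinAt y (v t (y t)) (Set.Ici t) t := by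
    intro t ht
    have htI : t ∈ Set.Icc (0:ℝ) ε := ⟨ht.1, le_of_lt ht.2⟩
    have htab : t ∈ Set.Ioo a b := hsub htI
    have hderiv : HasDerivAt y (fun k : Fin (N+1) =>
        MvPolynomial.eval (x t) (lieIter f ((k : ℕ)+1) p)) t :=
      hasDerivAt_pi.mpr (fun k => hyderiv t htab k)
    have heq : (fun k : Fin (N+1) => MvPolynomial.eval (x t) (lieIter f ((k : ℕ)+1) p))
        = v t (y t) := by
      funext k
      simp only [hv, if_pos htI]
      by_cases h : (k : ℕ) + 1 < N + 1
      · simp only [dif_pos h, hy]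
      · have hk : (k : ℕ) = N := by omega
        simp only [dif_neg h, hy, hk]
        rw [← hq]
        rw [map_sum]
        simp [MvPolynomial.eval_mul]
    rw [← heq]
    exact hderiv.hasDerivWithinAt
  -- 0 is a solution
  have hzero' : ∀ t ∈ Set.Ico (0:ℝ) ε,
      HasDerivWithinAt (fun _ : ℝ => (0 : Fin (N+1) → ℝ)) (v t 0) (Set.Ici t) t := by
    intro t ht
    have htI : t ∈ Set.Icc (0:ℝ) ε := ⟨ht.1, le_of_lt ht.2⟩
    have : v t 0 = 0 := by
      funext k
      simp only [hv, if_pos htI]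
      by_cases h : (k : ℕ) + 1 < N + 1
      · simp [dif_pos h]
      · simp [dif_neg h]
    rw [this]
    exact (hasDerivWithinAt_const t _ _)
  have hinit : y 0 = 0 := by
    funext k
    simp only [hy, hx0]
    exact hzero (k : ℕ)
  have huniq : Set.EqOn y (fun _ => (0 : Fin (N+1) → ℝ)) (Set.Icc 0 ε) :=
    ODE_solution_unique_of_mem_Icc_right
      (fun t _ => (hlip t).lipschitzOnWith (s := Set.univ))
      hycont hy' (fun t _ => Set.mem_univ _)
      (continuousOn_const) hzero' (fun t _ => Set.mem_univ _)
      hinit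
  refine ⟨ε, hε0, fun t ht => ?_⟩
  have := huniq ⟨le_of_lt ht.1, le_of_lt ht.2⟩
  have h0 := congrFun this (0 : Fin (N+1))
  simpa [hy, lieIter] using h0
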